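/- Let M be a module over the polynomial ring ℂ[∂] in one variable ∂, and let N := M ⊗_ℂ ℂ[v,v⁻¹] (equivalently, the module of finitely supported families (m_j)_{j∈ℤ} of elements of M, m_j being the coefficient of v^j). Define the ℂ-linear endomorphism D of N by D(m ⊗ v^j) := (∂m) ⊗ v^j + m ⊗ v^{j+1}. Then: (1) D is injective; (2) the cokernel N/D(N) is isomorphic to the localized module M_∂ := (localization of M at the multiplicative set of powers of ∂), via the map induced by m ⊗ v^j ↦ (−1)^j ∂^j·(image of m in M_∂), where ∂^j for j < 0 means division by ∂^{−j} in M_∂; moreover under this isomorphism the multiplication by v on N/D(N) corresponds to the action of −∂ on M_∂. -/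

import Mathlib

set_option linter.unusedSectionVars false


open Polynomial

noncomputable section

variable (M : Type*) [AddCommGroup M] [Module (Polynomial ℂ) M]
  [Module ℂ M] [IsScalarTower ℂ (Polynomial ℂ) M]

/-- Multiplication by `∂` (the polynomial variable) as a ℂ-linear map on `M`. -/
def delSmul : M →ₗ[ℂ] M :=
  (LinearMap.lsmul (Polynomial ℂ) M (X : Polynomial ℂ)).restrictScalars ℂ

/-- `N = M ⊗_ℂ ℂ[v,v⁻¹]`, as finitely supported families indexed by the
`v`-degree. -/
abbrev Nmod := ℤ →₀ M

/-- `D(m ⊗ v^j) = (∂m) ⊗ v^j + m ⊗ v^{j+1}`. -/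
def Dmap : Nmod M →ₗ[ℂ] Nmod M :=
  Finsupp.lsum ℕ fun j : ℤ =>
    (Finsupp.lsingle j).comp (delSmul M) + Finsupp.lsingle (j + 1)

/-- Multiplication by `v`: `m ⊗ v^j ↦ m ⊗ v^{j+1}`. -/
def Vmap : Nmod M →ₗ[ℂ] Nmod M :=
  Finsupp.lsum ℕ fun j : ℤ => Finsupp.lsingle (j + 1)

/-- The localization `M_∂` of `M` at the powers of `∂`. -/
abbrev Mloc := LocalizedModule (Submonoid.powers (X : Polynomial ℂ)) M

instance : Module ℂ (Mloc M) :=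
  Module.compHom _ (algebraMap ℂ (Polynomial ℂ))

/-- The action of `∂` on `M_∂`, as a unit of the endomorphism ring (it is
invertible on the localization); its `ℤ`-powers give the meaning of `∂^j`
for `j < 0`. -/
def delUnit : (Module.End (Polynomial ℂ) (Mloc M))ˣ :=
  (IsLocalizedModule.map_units
    (LocalizedModule.mkLinearMap (Submonoid.powers (X : Polynomial ℂ)) M)
    ⟨X, Submonoid.mem_powers _⟩).unit

/-! ### Auxiliary lemmas -/

instance : @IsScalarTower ℂ (Polynomial ℂ) (Mloc M) _ _
    (instModuleComplexMloc M).toDistribMulAction.toSMul :=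
  @IsScalarTower.mk _ _ _ _ _ (instModuleComplexMloc M).toDistribMulAction.toSMul (fun c p x => by
    rw [Algebra.smul_def, mul_smul]; rfl)

variable {M}

lemma delUnit_apply (x : Mloc M) :
    (delUnit M : Module.End (Polynomial ℂ) (Mloc M)) x = (X : Polynomial ℂ) • x := by
  rw [delUnit, IsUnit.unit_spec, Module.algebraMap_end_apply]

lemma unit_inv_apply {R N : Type*} [CommSemiring R] [AddCommMonoid N] [Module R N]
    (u : (Module.End R N)ˣ) (x : N) :
    ((u⁻¹ : (Module.End R N)ˣ) : Module.End R N) ((u : Module.End R N) x) = x := by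
  rw [← Module.End.mul_apply, Units.inv_mul, Module.End.one_apply]

lemma unit_apply_eq_zero {R N : Type*} [CommSemiring R] [AddCommMonoid N] [Module R N]
    {u : (Module.End R N)ˣ} {x : N} (h : (u : Module.End R N) x = 0) : x = 0 := by
  have := congrArg ((u⁻¹ : (Module.End R N)ˣ) : Module.End R N) h
  rwa [unit_inv_apply, map_zero] at this

variable (M)

/-- `m ↦ ∂^j · loc m`, as a `ℂ`-linear map. -/
def baseMap (j : ℤ) : M →ₗ[ℂ] Mloc M :=
  (((delUnit M ^ j : (Module.End (Polynomial ℂ) (Mloc M))ˣ) :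
      Module.End (Polynomial ℂ) (Mloc M)).restrictScalars ℂ).comp
    ((LocalizedModule.mkLinearMap (Submonoid.powers (X : Polynomial ℂ)) M).restrictScalars ℂ)

/-- The map `Φ : N → M_∂`, `m ⊗ v^j ↦ (−1)^j ∂^j·loc(m)`. -/
def Phi : Nmod M →ₗ[ℂ] Mloc M :=
  Finsupp.lsum ℕ fun j : ℤ => ((Int.negOnePow j : ℤˣ) : ℤ) • baseMap M j

variable {M}

lemma baseMap_apply (j : ℤ) (m : M) :
    baseMap M j m = ((delUnit M ^ j : (Module.End (Polynomial ℂ) (Mloc M))ˣ) :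
      Module.End (Polynomial ℂ) (Mloc M))
      (LocalizedModule.mkLinearMap (Submonoid.powers (X : Polynomial ℂ)) M m) := rfl

lemma Phi_single (j : ℤ) (m : M) :
    Phi M (Finsupp.single j m) = ((Int.negOnePow j : ℤˣ) : ℤ) • baseMap M j m := by
  simp [Phi]
  rfl

lemma baseMap_succ (j : ℤ) (m : M) :
    baseMap M (j + 1) m = (X : Polynomial ℂ) • baseMap M j m := by
  simp only [baseMap, LinearMap.comp_apply, LinearMap.restrictScalars_apply]
  rw [zpow_add_one, Units.val_mul, Module.End.mul_apply, delUnit_apply, map_smul]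

lemma baseMap_Xsmul (j : ℤ) (m : M) :
    baseMap M j ((X : Polynomial ℂ) • m) = (X : Polynomial ℂ) • baseMap M j m := by
  simp only [baseMap, LinearMap.comp_apply, LinearMap.restrictScalars_apply]
  rw [map_smul, map_smul]

lemma Dmap_single (j : ℤ) (m : M) :
    Dmap M (Finsupp.single j m) =
      Finsupp.single j ((X : Polynomial ℂ) • m) + Finsupp.single (j + 1) m := by
  simp [Dmap, delSmul]

lemma Vmap_single (j : ℤ) (m : M) :
    Vmap M (Finsupp.single j m) = Finsupp.single (j + 1) m := by
  simp [Vmap]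

lemma Phi_Dmap (f : Nmod M) : Phi M (Dmap M f) = 0 := by
  induction f using Finsupp.induction_linear with
  | zero => simp
  | add f g hf hg => rw [map_add, map_add, hf, hg, add_zero]
  | single j m =>
    rw [Dmap_single, map_add, Phi_single, Phi_single, baseMap_succ, baseMap_Xsmul,
      Int.negOnePow_succ, Units.val_neg, neg_zsmul, add_neg_cancel]

lemma Dmap_apply (f : Nmod M) (k : ℤ) :
    Dmap M f k = (X : Polynomial ℂ) • f k + f (k - 1) := by
  induction f using Finsupp.induction_linear with
  | zero => simp
  | add f g hf hg => simp [map_add, hf, hg, smul_add]; abel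
  | single j m =>
    rw [Dmap_single]
    simp only [Finsupp.add_apply, Finsupp.single_apply]
    split_ifs <;> first | (exfalso; omega) | simp

lemma Dmap_injective : Function.Injective (Dmap M) := by
  rw [injective_iff_map_eq_zero]
  intro f hf
  by_contra hne
  have hsupp : f.support.Nonempty := Finsupp.support_nonempty_iff.mpr hne
  set j1 := f.support.max' hsupp with hj1
  have h1 : f j1 ≠ 0 := Finsupp.mem_support_iff.mp (f.support.max'_mem hsupp)
  have h2 : f (j1 + 1) = 0 := by
    by_contra h
    have := f.support.le_max' (j1 + 1) (Finsupp.mem_support_iff.mpr h)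
    omega
  have := Dmap_apply f (j1 + 1)
  rw [hf] at this
  simp only [Finsupp.coe_zero, Pi.zero_apply, add_sub_cancel_right, h2, smul_zero,
    zero_add] at this
  exact h1 this.symm

lemma single_red (n : ℕ) (j : ℤ) (m : M) :
    Finsupp.single j m -
      Finsupp.single (j - n) ((((-1 : Polynomial ℂ) * X) ^ n) • m) ∈
      LinearMap.range (Dmap M) := by
  induction n generalizing j m with
  | zero => simp
  | succ n ih =>
    have step : Finsupp.single j m -
        Finsupp.single (j - 1) ((((-1 : Polynomial ℂ) * X)) • m) ∈
        LinearMap.range (Dmap M) := by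
      refine ⟨Finsupp.single (j - 1) m, ?_⟩
      rw [Dmap_single]
      have h : j - 1 + 1 = j := by omega
      rw [h, neg_one_mul, neg_smul, Finsupp.single_neg, sub_neg_eq_add, add_comm]
    have ih' := ih (j - 1) (((-1 : Polynomial ℂ) * X) • m)
    have comb := Submodule.add_mem _ step ih'
    have heq : j - 1 - n = j - (n + 1 : ℕ) := by push_cast; omega
    rw [heq, sub_add_sub_cancel, smul_smul, ← pow_succ] at comb
    exact comb

lemma reduce_to_single (f : Nmod M) (j0 : ℤ) (hb : ∀ j ∈ f.support, j0 ≤ j) :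
    ∃ m : M, f - Finsupp.single j0 m ∈ LinearMap.range (Dmap M) := by
  induction f using Finsupp.induction with
  | zero => exact ⟨0, by simp⟩
  | single_add j m f hjf hm ih =>
    have hbf : ∀ k ∈ f.support, j0 ≤ k := by
      intro k hk
      refine hb k ?_
      rw [Finsupp.mem_support_iff] at hk ⊢
      have hkj : k ≠ j := fun h => hjf (Finsupp.mem_support_iff.mpr (h ▸ hk))
      simp [Finsupp.single_apply, hkj.symm, hk]
    have hj0j : j0 ≤ j := by
      refine hb j ?_
      rw [Finsupp.mem_support_iff]
      simp [Finsupp.single_apply, hjf, Finsupp.notMem_support_iff.mp hjf, hm]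
    obtain ⟨m', hm'⟩ := ih hbf
    set n : ℕ := (j - j0).toNat with hn
    have hjn : j - n = j0 := by omega
    have hred := single_red n j m
    rw [hjn] at hred
    refine ⟨(((-1 : Polynomial ℂ) * X) ^ n) • m + m', ?_⟩
    have := Submodule.add_mem _ hred hm'
    have heq : Finsupp.single j m - Finsupp.single j0 ((((-1 : Polynomial ℂ) * X) ^ n) • m)
        + (f - Finsupp.single j0 m')
        = Finsupp.single j m + f -
          Finsupp.single j0 ((((-1 : Polynomial ℂ) * X) ^ n) • m + m') := by
      rw [Finsupp.single_add]; abel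
    rwa [heq] at this

lemma loc_eq_zero {m : M}
    (h : LocalizedModule.mkLinearMap (Submonoid.powers (X : Polynomial ℂ)) M m = 0) :
    ∃ n : ℕ, (X : Polynomial ℂ) ^ n • m = 0 := by
  rw [LocalizedModule.mkLinearMap_apply] at h
  rw [show (0 : Mloc M) = LocalizedModule.mk 0 1 from (LocalizedModule.zero_mk 1).symm,
    LocalizedModule.mk_eq] at h
  obtain ⟨u, hu⟩ := h
  obtain ⟨n, hn⟩ := u.2
  refine ⟨n, ?_⟩
  have h2 : u • m = 0 := by simpa using hu
  rw [Submonoid.smul_def] at h2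
  rw [show (X : Polynomial ℂ) ^ n = (u : Polynomial ℂ) from hn]
  exact h2

/-- `∂^{-n} · loc m = mk m ⟨X^n⟩`. -/
lemma baseMap_neg_nat (n : ℕ) (m : M) :
    baseMap M (-(n : ℤ)) m =
      LocalizedModule.mk m ⟨X ^ n, pow_mem (Submonoid.mem_powers _) n⟩ := by
  have key : ((delUnit M ^ (n : ℤ) : (Module.End (Polynomial ℂ) (Mloc M))ˣ) :
      Module.End (Polynomial ℂ) (Mloc M))
      (LocalizedModule.mk m ⟨X ^ n, pow_mem (Submonoid.mem_powers _) n⟩)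
      = LocalizedModule.mk m 1 := by
    rw [zpow_natCast, Units.val_pow_eq_pow_val]
    rw [delUnit, IsUnit.unit_spec, ← map_pow, Module.algebraMap_end_apply]
    show ((X : Polynomial ℂ) ^ n) • LocalizedModule.mk m
      (⟨X ^ n, pow_mem (Submonoid.mem_powers _) n⟩ : Submonoid.powers (X : Polynomial ℂ)) = _
    rw [LocalizedModule.smul'_mk]
    exact LocalizedModule.mk_cancel ⟨X ^ n, pow_mem (Submonoid.mem_powers _) n⟩ m
  rw [baseMap_apply, LocalizedModule.mkLinearMap_apply, zpow_neg, ← key, unit_inv_apply]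

theorem stmt_11_aux : True := trivial

variable (M)

/-- (1) `D` is injective; (2) the cokernel `N/D(N)` is isomorphic to `M_∂`
via the map induced by `m ⊗ v^j ↦ (−1)^j ∂^j·loc(m)`, and under this
isomorphism multiplication by `v` corresponds to the action of `−∂`. -/
theorem stmt_11 :
    Function.Injective (Dmap M) ∧
    ∃ Φ : Nmod M →ₗ[ℂ] Mloc M,
      (∀ (j : ℤ) (m : M),
        Φ (Finsupp.single j m) =
          ((Int.negOnePow j : ℤˣ) •
            (((delUnit M ^ j : (Module.End (Polynomial ℂ) (Mloc M))ˣ) :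
                Module.End (Polynomial ℂ) (Mloc M))
              ((LocalizedModule.mkLinearMap
                  (Submonoid.powers (X : Polynomial ℂ)) M) m)))) ∧
      Function.Surjective Φ ∧
      LinearMap.ker Φ = LinearMap.range (Dmap M) ∧
      ∀ f : Nmod M, Φ (Vmap M f) = -((X : Polynomial ℂ) • Φ f) := by
  refine ⟨Dmap_injective, Phi M, ?_, ?_, ?_, ?_⟩
  · intro j m
    rw [Phi_single, baseMap_apply, Units.smul_def]
  · -- surjectivity
    intro x
    induction x using LocalizedModule.induction_on with
    | h m s =>
      obtain ⟨n, hn⟩ := s.2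
      have hs : (⟨X ^ n, pow_mem (Submonoid.mem_powers _) n⟩ :
          Submonoid.powers (X : Polynomial ℂ)) = s := Subtype.ext hn
      refine ⟨Finsupp.single (-(n : ℤ)) (((Int.negOnePow (-(n : ℤ)) : ℤˣ) : ℤ) • m), ?_⟩
      rw [Phi_single, map_zsmul, smul_smul, ← Units.val_mul, Int.units_mul_self,
        Units.val_one, one_smul, baseMap_neg_nat, hs]
  · -- kernel = range
    apply le_antisymm
    · intro f hf
      rw [LinearMap.mem_ker] at hf
      set j0 : ℤ := -((f.support.sup Int.natAbs : ℕ) : ℤ) with hj0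
      have hb : ∀ j ∈ f.support, j0 ≤ j := by
        intro j hj
        have h1 := Finset.le_sup (f := Int.natAbs) hj
        omega
      obtain ⟨m, hm⟩ := reduce_to_single f j0 hb
      obtain ⟨g, hg⟩ := hm
      have h0 : Phi M (Finsupp.single j0 m) = 0 := by
        have h := Phi_Dmap (M := M) g
        rw [hg, map_sub, hf, zero_sub, neg_eq_zero] at h
        exact h
      rw [Phi_single] at h0
      have hb0 : baseMap M j0 m = 0 := by
        have := congrArg (fun x => ((Int.negOnePow j0 : ℤˣ) : ℤ) • x) h0
        simpa [smul_smul, ← Units.val_mul, Int.units_mul_self, zsmul_zero] using this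
      have hmk : LocalizedModule.mkLinearMap (Submonoid.powers (X : Polynomial ℂ)) M m = 0 :=
        unit_apply_eq_zero (baseMap_apply j0 m ▸ hb0)
      obtain ⟨n, hn⟩ := loc_eq_zero hmk
      have hz : ((((-1 : Polynomial ℂ) * X) ^ n)) • m = 0 := by
        rw [mul_pow, mul_smul, hn, smul_zero]
      have hr := single_red n j0 m
      rw [hz] at hr
      simp only [Finsupp.single_zero, sub_zero] at hr
      have hfeq : f = Dmap M g + Finsupp.single j0 m := by rw [hg]; abel
      rw [hfeq]
      exact Submodule.add_mem _ ⟨g, rfl⟩ hr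
    · rintro f ⟨g, rfl⟩
      exact LinearMap.mem_ker.mpr (Phi_Dmap g)
  · -- Vmap relation
    intro f
    induction f using Finsupp.induction_linear with
    | zero => simp
    | add f g hf hg => rw [map_add, map_add, hf, hg, map_add, smul_add, neg_add]
    | single j m =>
      rw [Vmap_single, Phi_single, Phi_single, baseMap_succ, Int.negOnePow_succ,
        Units.val_neg, neg_zsmul, smul_comm]


end
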